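/- Let F be a finite measure on [0,∞) and z : [0,∞) → [0,∞) measurable and bounded on finite intervals (i.e., sup_{0≤t≤T} |z(t)| < ∞ for every T < ∞). Then the renewal equation Z(t) = z(t) + ∫₀^t Z(t-u) F(du) has a unique measurable solution bounded on finite intervals, given by Z(t) = ∫₀^t z(t-u) Φ(du) where Φ(t) = Σ_{n≥0} F^{*n}(t). -/

import Mathlib

open MeasureTheory

/-- Convolution of two measures on `ℝ`. -/
noncomputable def mconv (μ ν : Measure ℝ) : Measure ℝ :=
  (μ.prod ν).map (fun p => p.1 + p.2)

/-- `mpow F n = F^{*n}`, with `F^{*0} = δ₀`. -/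
noncomputable def mpow (F : Measure ℝ) : ℕ → Measure ℝ
  | 0 => Measure.dirac 0
  | n + 1 => mconv (mpow F n) F

/-- The renewal measure `Φ = Σ_{n≥0} F^{*n}`. -/
noncomputable def renewalMeasure (F : Measure ℝ) : Measure ℝ :=
  Measure.sum (fun n => mpow F n)

/-- A function is bounded on finite intervals. -/
def BddOnFinite (Z : ℝ → ℝ) : Prop := ∀ T : ℝ, ∃ C : ℝ, ∀ t ∈ Set.Icc 0 T, |Z t| ≤ C

namespace RenewalAux

lemma measurable_add2 : Measurable fun p : ℝ × ℝ => p.1 + p.2 :=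
  measurable_fst.add measurable_snd

instance mconv_finite (μ ν : Measure ℝ) [IsFiniteMeasure μ] [IsFiniteMeasure ν] :
    IsFiniteMeasure (mconv μ ν) := by
  unfold mconv; infer_instance

instance mpow_finite (F : Measure ℝ) [IsFiniteMeasure F] (n : ℕ) :
    IsFiniteMeasure (mpow F n) := by
  induction n with
  | zero => unfold mpow; infer_instance
  | succ n ih => unfold mpow; exact mconv_finite _ _

instance renewal_sfinite (F : Measure ℝ) [IsFiniteMeasure F] : SFinite (renewalMeasure F) := by
  unfold renewalMeasure; infer_instance

lemma mconv_Iio_null (μ ν : Measure ℝ) [SFinite ν] (hμ : μ (Set.Iio 0) = 0)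
    (hν : ν (Set.Iio 0) = 0) : mconv μ ν (Set.Iio 0) = 0 := by
  rw [mconv, Measure.map_apply measurable_add2 measurableSet_Iio]
  have hsub : (fun p : ℝ × ℝ => p.1 + p.2) ⁻¹' Set.Iio 0 ⊆
      (Set.Iio 0 ×ˢ Set.univ) ∪ (Set.univ ×ˢ Set.Iio 0) := by
    rintro ⟨a, b⟩ h
    simp only [Set.mem_preimage, Set.mem_Iio, Set.mem_union, Set.mem_prod, Set.mem_univ,
      and_true, true_and] at h ⊢
    by_contra hc
    push_neg at hc
    linarith [hc.1, hc.2]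
  refine le_antisymm (le_trans (measure_mono hsub) ?_) zero_le
  refine le_trans (measure_union_le _ _) ?_
  rw [Measure.prod_prod, Measure.prod_prod, hμ, hν]
  simp

lemma mpow_Iio_null (F : Measure ℝ) [IsFiniteMeasure F] (hF : F (Set.Iio 0) = 0) (n : ℕ) :
    mpow F n (Set.Iio 0) = 0 := by
  induction n with
  | zero => simp [mpow]
  | succ n ih => exact mconv_Iio_null _ _ ih hF

lemma renewal_Iio_null (F : Measure ℝ) [IsFiniteMeasure F] (hF : F (Set.Iio 0) = 0) :
    renewalMeasure F (Set.Iio 0) = 0 := by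
  rw [renewalMeasure, Measure.sum_apply _ measurableSet_Iio]
  simp [mpow_Iio_null F hF]

lemma mconv_comm (μ ν : Measure ℝ) [SFinite μ] [SFinite ν] : mconv μ ν = mconv ν μ := by
  conv_rhs => rw [mconv, ← Measure.prod_swap]
  rw [Measure.map_map measurable_add2 measurable_swap, mconv]
  congr 1
  ext ⟨a, b⟩
  exact add_comm _ _

lemma renewal_eq (F : Measure ℝ) [IsFiniteMeasure F] :
    renewalMeasure F = Measure.dirac 0 + mconv (renewalMeasure F) F := by
  have h1 : mconv (renewalMeasure F) F = Measure.sum (fun n => mpow F (n + 1)) := by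
    rw [renewalMeasure, mconv, Measure.prod_sum_left, Measure.map_sum measurable_add2.aemeasurable]
    rfl
  rw [h1]
  ext s hs
  rw [renewalMeasure, Measure.sum_apply _ hs, Measure.add_apply, Measure.sum_apply _ hs,
    tsum_eq_zero_add' ENNReal.summable]
  rfl

lemma integrableOn_of_bound (μ : Measure ℝ) (s : Set ℝ) (hs : MeasurableSet s) (hμ : μ s < ⊤)
    (f : ℝ → ℝ) (hf : Measurable f) (C : ℝ) (hC : ∀ x ∈ s, |f x| ≤ C) :
    IntegrableOn f s μ := by
  refine Integrable.mono' (g := fun _ => C) ?_ hf.aestronglyMeasurable ?_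
  · exact integrableOn_const hμ.ne
  · refine (ae_restrict_iff' hs).2 (ae_of_all _ ?_)
    intro x hx
    rw [Real.norm_eq_abs]
    exact hC x hx

lemma conv_integral (μ ν : Measure ℝ) [SFinite μ] [SFinite ν]
    (hμ0 : μ (Set.Iio 0) = 0) (hν0 : ν (Set.Iio 0) = 0)
    (g : ℝ → ℝ) (hg : Measurable g) (t : ℝ) (ht : 0 ≤ t)
    (C : ℝ) (hC : ∀ s ∈ Set.Icc 0 t, |g s| ≤ C)
    (hμt : μ (Set.Icc 0 t) < ⊤) (hνt : ν (Set.Icc 0 t) < ⊤) :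
    ∫ w in Set.Icc 0 t, g (t - w) ∂(mconv μ ν)
      = ∫ u in Set.Icc 0 t, (∫ v in Set.Icc 0 (t - u), g (t - u - v) ∂μ) ∂ν := by
  have hC0 : 0 ≤ C := le_trans (abs_nonneg _) (hC 0 ⟨le_rfl, ht⟩)
  have hae : ∀ᵐ p : ℝ × ℝ ∂(ν.prod μ), 0 ≤ p.1 ∧ 0 ≤ p.2 := by
    have hN : (ν.prod μ) ((Set.Iio 0 ×ˢ Set.univ) ∪ (Set.univ ×ˢ Set.Iio 0)) = 0 := by
      refine le_antisymm (le_trans (measure_union_le _ _) ?_) zero_le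
      rw [Measure.prod_prod, Measure.prod_prod, hμ0, hν0]
      simp
    refine measure_mono_null ?_ hN
    intro p hp
    simp only [Set.mem_compl_iff, Set.mem_setOf_eq] at hp ⊢
    by_contra hc
    simp only [Set.mem_union, Set.mem_prod, Set.mem_univ, Set.mem_Iio, and_true, true_and,
      not_or, not_lt] at hc
    exact hp ⟨hc.1, hc.2⟩
  set S : Set (ℝ × ℝ) := {p : ℝ × ℝ | p.1 + p.2 ∈ Set.Icc 0 t} with hS
  have hSm : MeasurableSet S := measurable_add2 measurableSet_Icc
  set f : ℝ × ℝ → ℝ := S.indicator (fun p => g (t - p.1 - p.2)) with hf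
  have hfm : Measurable f := by
    refine Measurable.indicator ?_ hSm
    exact hg.comp ((measurable_const.sub measurable_fst).sub measurable_snd)
  have hfint : Integrable f (ν.prod μ) := by
    refine Integrable.mono' (g := (Set.Icc 0 t ×ˢ Set.Icc 0 t).indicator fun _ => C)
      ?_ hfm.aestronglyMeasurable ?_
    · rw [integrable_indicator_iff (measurableSet_Icc.prod measurableSet_Icc)]
      refine integrableOn_const ?_
      rw [Measure.prod_prod]
      exact (ENNReal.mul_lt_top hνt hμt).ne
    · filter_upwards [hae] with p hp
      rcases Classical.em (p ∈ S) with hin | hout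
      · have h1 : p.1 + p.2 ≤ t := (hS ▸ hin).2
        have hrect : p ∈ Set.Icc 0 t ×ˢ Set.Icc 0 t :=
          ⟨⟨hp.1, by linarith [hp.2]⟩, ⟨hp.2, by linarith [hp.1]⟩⟩
        rw [hf, Set.indicator_of_mem hin, Set.indicator_of_mem hrect, Real.norm_eq_abs]
        refine hC _ ⟨by linarith [(hS ▸ hin).1], ?_⟩
        have := (hS ▸ hin).1
        have h2 : t - p.1 - p.2 = t - (p.1 + p.2) := by ring
        rw [h2]; linarith
      · rw [hf, Set.indicator_of_notMem hout, norm_zero]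
        exact Set.indicator_apply_nonneg (fun _ => hC0)
  have hswap : mconv μ ν = Measure.map (fun p : ℝ × ℝ => p.1 + p.2) (ν.prod μ) := by
    rw [mconv_comm]; rfl
  have hgm : Measurable fun w => g (t - w) := hg.comp (measurable_const.sub measurable_id)
  have hL : ∫ w in Set.Icc 0 t, g (t - w) ∂(mconv μ ν) = ∫ p, f p ∂(ν.prod μ) := by
    rw [hswap, Measure.restrict_map measurable_add2 measurableSet_Icc,
      integral_map measurable_add2.aemeasurable hgm.aestronglyMeasurable]
    rw [← integral_indicator (by exact hSm)]
    congr 1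
    ext p
    simp only [hf, hS, Set.indicator, Set.mem_preimage, Set.mem_setOf_eq]
    split_ifs with h
    · ring_nf
    · rfl
  rw [hL, integral_prod f hfint]
  have haeν : ∀ᵐ b ∂ν, 0 ≤ b := by
    rw [ae_iff]
    refine measure_mono_null ?_ hν0
    intro b hb
    simp only [Set.mem_setOf_eq, not_le] at hb
    exact hb
  have haeμ : ∀ᵐ a ∂μ, 0 ≤ a := by
    rw [ae_iff]
    refine measure_mono_null ?_ hμ0
    intro a ha
    simp only [Set.mem_setOf_eq, not_le] at ha
    exact ha
  have hinner : ∀ᵐ b ∂ν, (∫ a, f (b, a) ∂μ)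
      = Set.indicator (Set.Icc 0 t) (fun b => ∫ a in Set.Icc 0 (t - b), g (t - b - a) ∂μ) b := by
    filter_upwards [haeν] with b hb
    rcases le_or_gt b t with hbt | hbt
    · rw [Set.indicator_of_mem (Set.mem_Icc.2 ⟨hb, hbt⟩), ← integral_indicator measurableSet_Icc]
      refine integral_congr_ae ?_
      filter_upwards [haeμ] with a ha
      rw [hf]
      rcases le_or_gt a (t - b) with hab | hab
      · have hmemS : (b, a) ∈ S := by
          simp only [hS, Set.mem_setOf_eq, Set.mem_Icc]
          exact ⟨by positivity, by linarith⟩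
        rw [Set.indicator_of_mem hmemS, Set.indicator_of_mem (Set.mem_Icc.2 ⟨ha, hab⟩)]
      · have hnotS : (b, a) ∉ S := by
          simp only [hS, Set.mem_setOf_eq, Set.mem_Icc]
          intro hmem
          linarith [hmem.2]
        have hnotI : a ∉ Set.Icc 0 (t - b) := by
          simp only [Set.mem_Icc]
          intro hmem
          linarith [hmem.2]
        rw [Set.indicator_of_notMem hnotS, Set.indicator_of_notMem hnotI]
    · rw [Set.indicator_of_notMem (fun hmem => absurd (Set.mem_Icc.1 hmem).2 (not_le.2 hbt))]
      have : (fun a => f (b, a)) =ᵐ[μ] fun _ => (0 : ℝ) := by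
        filter_upwards [haeμ] with a ha
        rw [hf, Set.indicator_of_notMem]
        intro hmem
        have hle : b + a ≤ t := (hS ▸ hmem).2
        linarith
      rw [integral_congr_ae this, integral_zero]
  rw [integral_congr_ae hinner, integral_indicator measurableSet_Icc]

end RenewalAux

/-- Existence and uniqueness of the solution of the renewal equation
`Z(t) = z(t) + ∫₀ᵗ Z(t-u) F(du)`: the unique measurable solution bounded on finite
intervals is `Z(t) = ∫₀ᵗ z(t-u) Φ(du)` where `Φ = Σ_{n≥0} F^{*n}`. -/
theorem renewal_equation_solution
    (F : Measure ℝ) [IsFiniteMeasure F] (hFsupp : F (Set.Iio 0) = 0)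
    (z : ℝ → ℝ) (hz : Measurable z) (hznn : ∀ t, 0 ≤ z t) (hzb : BddOnFinite z)
    (hΦfin : ∀ t : ℝ, renewalMeasure F (Set.Icc 0 t) < ⊤) :
    (Measurable (fun t => ∫ u in Set.Icc 0 t, z (t - u) ∂(renewalMeasure F)) ∧
      BddOnFinite (fun t => ∫ u in Set.Icc 0 t, z (t - u) ∂(renewalMeasure F)) ∧
      ∀ t, 0 ≤ t →
        (∫ u in Set.Icc 0 t, z (t - u) ∂(renewalMeasure F))
          = z t + ∫ u in Set.Icc 0 t,
              (∫ v in Set.Icc 0 (t - u), z (t - u - v) ∂(renewalMeasure F)) ∂F) ∧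
    ∀ Z : ℝ → ℝ, Measurable Z → BddOnFinite Z →
      (∀ t, 0 ≤ t → Z t = z t + ∫ u in Set.Icc 0 t, Z (t - u) ∂F) →
      ∀ t, 0 ≤ t → Z t = ∫ u in Set.Icc 0 t, z (t - u) ∂(renewalMeasure F) := by
  classical
  have hΦ0 : renewalMeasure F (Set.Iio 0) = 0 := RenewalAux.renewal_Iio_null F hFsupp
  -- measurability of a generic convolution-type integral against a sigma-finite measure
  have measgen : ∀ (μ : Measure ℝ), SFinite μ → ∀ (g : ℝ → ℝ), Measurable g →
      Measurable (fun t => ∫ u in Set.Icc 0 t, g (t - u) ∂μ) := by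
    intro μ hsf g hg
    haveI := hsf
    have hEm : MeasurableSet {q : ℝ × ℝ | 0 ≤ q.2 ∧ q.2 ≤ q.1} :=
      (measurableSet_le measurable_const measurable_snd).inter
        (measurableSet_le measurable_snd measurable_fst)
    have hfm : Measurable fun q : ℝ × ℝ =>
        Set.indicator {q : ℝ × ℝ | 0 ≤ q.2 ∧ q.2 ≤ q.1} (fun q => g (q.1 - q.2)) q :=
      (hg.comp (measurable_fst.sub measurable_snd)).indicator hEm
    have key : Measurable fun t => ∫ u,
        Set.indicator {q : ℝ × ℝ | 0 ≤ q.2 ∧ q.2 ≤ q.1} (fun q => g (q.1 - q.2)) (t, u) ∂μ :=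
      (hfm.stronglyMeasurable.integral_prod_right').measurable
    convert key using 2 with t
    rw [← integral_indicator measurableSet_Icc]
    congr 1
  have hZ₀m : Measurable (fun t => ∫ u in Set.Icc 0 t, z (t - u) ∂(renewalMeasure F)) :=
    measgen _ (RenewalAux.renewal_sfinite F) z hz
  -- boundedness
  have hZ₀b : BddOnFinite (fun t => ∫ u in Set.Icc 0 t, z (t - u) ∂(renewalMeasure F)) := by
    intro T
    rcases le_or_gt 0 T with hT | hT
    · obtain ⟨C, hC⟩ := hzb T
      have hC0 : 0 ≤ C := le_trans (abs_nonneg _) (hC 0 ⟨le_rfl, hT⟩)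
      refine ⟨C * ((renewalMeasure F) (Set.Icc 0 T)).toReal, fun t ht => ?_⟩
      have h1 : ‖∫ u in Set.Icc 0 t, z (t - u) ∂(renewalMeasure F)‖
          ≤ C * ((renewalMeasure F) (Set.Icc 0 t)).toReal := by
        refine norm_setIntegral_le_of_norm_le_const (hΦfin t) ?_
        intro u hu
        rw [Real.norm_eq_abs]
        exact hC (t - u) ⟨by linarith [hu.2], by linarith [hu.1, ht.2]⟩
      rw [Real.norm_eq_abs] at h1
      refine le_trans h1 (mul_le_mul_of_nonneg_left ?_ hC0)
      exact ENNReal.toReal_le_toReal (hΦfin t).ne (hΦfin T).ne |>.2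
        (measure_mono (Set.Icc_subset_Icc_right ht.2))
    · exact ⟨0, fun t ht => absurd (ht.1.trans ht.2) (not_le.2 hT)⟩
  -- the renewal equation for Z₀
  have heqn : ∀ t, 0 ≤ t →
      (∫ u in Set.Icc 0 t, z (t - u) ∂(renewalMeasure F))
        = z t + ∫ u in Set.Icc 0 t,
            (∫ v in Set.Icc 0 (t - u), z (t - u - v) ∂(renewalMeasure F)) ∂F := by
    intro t ht
    obtain ⟨C, hC⟩ := hzb t
    have key := RenewalAux.renewal_eq F
    have hconvle : mconv (renewalMeasure F) F (Set.Icc 0 t) < ⊤ := by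
      refine lt_of_le_of_lt ?_ (hΦfin t)
      conv_rhs => rw [key]
      rw [Measure.add_apply]
      exact le_add_self
    have hbz : ∀ u ∈ Set.Icc 0 t, |z (t - u)| ≤ C := fun u hu =>
      hC (t - u) ⟨by linarith [hu.2], by linarith [hu.1]⟩
    have hzm : Measurable fun u => z (t - u) := hz.comp (measurable_const.sub measurable_id)
    conv_lhs => rw [key]
    rw [Measure.restrict_add, integral_add_measure
      (RenewalAux.integrableOn_of_bound _ _ measurableSet_Icc (measure_lt_top _ _) _ hzm C hbz)
      (RenewalAux.integrableOn_of_bound _ _ measurableSet_Icc hconvle _ hzm C hbz)]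
    congr 1
    · rw [setIntegral_dirac' hzm.stronglyMeasurable 0 measurableSet_Icc,
        if_pos (Set.mem_Icc.2 ⟨le_rfl, ht⟩), sub_zero]
    · exact RenewalAux.conv_integral (renewalMeasure F) F hΦ0 hFsupp z hz t ht C hC
        (hΦfin t) (measure_lt_top _ _)
  refine ⟨⟨hZ₀m, hZ₀b, heqn⟩, ?_⟩
  -- uniqueness
  intro Z hZm hZb hZeq t ht
  set Z₀ : ℝ → ℝ := fun r => ∫ v in Set.Icc 0 r, z (r - v) ∂(renewalMeasure F) with hZ₀def
  set D : ℝ → ℝ := fun r => Z r - Z₀ r with hDdef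
  have hDm : Measurable D := hZm.sub hZ₀m
  have hDb : BddOnFinite D := by
    intro T
    obtain ⟨C1, hC1⟩ := hZb T
    obtain ⟨C2, hC2⟩ := hZ₀b T
    refine ⟨C1 + C2, fun s hs => ?_⟩
    have := abs_sub (Z s) (Z₀ s)
    calc |D s| = |Z s - Z₀ s| := rfl
      _ ≤ |Z s| + |Z₀ s| := abs_sub _ _
      _ ≤ C1 + C2 := add_le_add (hC1 s hs) (hC2 s hs)
  -- one-step equation for D
  have hD1 : ∀ s, 0 ≤ s → D s = ∫ u in Set.Icc 0 s, D (s - u) ∂F := by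
    intro s hs
    obtain ⟨C1, hC1⟩ := hZb s
    obtain ⟨C2, hC2⟩ := hZ₀b s
    have hb1 : ∀ u ∈ Set.Icc 0 s, |Z (s - u)| ≤ C1 := fun u hu =>
      hC1 (s - u) ⟨by linarith [hu.2], by linarith [hu.1]⟩
    have hb2 : ∀ u ∈ Set.Icc 0 s, |Z₀ (s - u)| ≤ C2 := fun u hu =>
      hC2 (s - u) ⟨by linarith [hu.2], by linarith [hu.1]⟩
    have hi1 : IntegrableOn (fun u => Z (s - u)) (Set.Icc 0 s) F :=
      RenewalAux.integrableOn_of_bound _ _ measurableSet_Icc (measure_lt_top _ _) _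
        (hZm.comp (measurable_const.sub measurable_id)) C1 hb1
    have hi2 : IntegrableOn (fun u => Z₀ (s - u)) (Set.Icc 0 s) F :=
      RenewalAux.integrableOn_of_bound _ _ measurableSet_Icc (measure_lt_top _ _) _
        (hZ₀m.comp (measurable_const.sub measurable_id)) C2 hb2
    have e1 : Z s = z s + ∫ u in Set.Icc 0 s, Z (s - u) ∂F := hZeq s hs
    have e2 : Z₀ s = z s + ∫ u in Set.Icc 0 s, Z₀ (s - u) ∂F := heqn s hs
    calc D s = Z s - Z₀ s := rfl
      _ = (∫ u in Set.Icc 0 s, Z (s - u) ∂F) - ∫ u in Set.Icc 0 s, Z₀ (s - u) ∂F := by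
          rw [e1, e2]; ring
      _ = ∫ u in Set.Icc 0 s, (Z (s - u) - Z₀ (s - u)) ∂F := (integral_sub hi1 hi2).symm
      _ = ∫ u in Set.Icc 0 s, D (s - u) ∂F := rfl
  -- n-step equation for D
  have hDn : ∀ n : ℕ, ∀ s, 0 ≤ s → D s = ∫ u in Set.Icc 0 s, D (s - u) ∂(mpow F n) := by
    intro n
    induction n with
    | zero =>
      intro s hs
      show D s = ∫ u in Set.Icc 0 s, D (s - u) ∂(Measure.dirac 0)
      have hm : Measurable fun u : ℝ => D (s - u) := hDm.comp (measurable_const.sub measurable_id)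
      rw [setIntegral_dirac' hm.stronglyMeasurable 0 measurableSet_Icc,
        if_pos (Set.mem_Icc.2 ⟨le_rfl, hs⟩), sub_zero]
    | succ n ih =>
      intro s hs
      obtain ⟨C, hC⟩ := hDb s
      have step1 : D s = ∫ u in Set.Icc 0 s,
          (∫ v in Set.Icc 0 (s - u), D (s - u - v) ∂F) ∂(mpow F n) := by
        rw [ih s hs]
        refine setIntegral_congr_fun measurableSet_Icc (fun u hu => ?_)
        exact hD1 (s - u) (by linarith [hu.2])
      rw [step1, ← RenewalAux.conv_integral F (mpow F n) hFsupp
        (RenewalAux.mpow_Iio_null F hFsupp n) D hDm s hs C hC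
        (measure_lt_top _ _) (measure_lt_top _ _)]
      have : mconv F (mpow F n) = mpow F (n + 1) := by
        rw [RenewalAux.mconv_comm]; rfl
      rw [this]
  -- pass to the limit
  have hCD := hDb t
  obtain ⟨C, hC⟩ := hCD
  have hC0 : 0 ≤ C := le_trans (abs_nonneg _) (hC 0 ⟨le_rfl, ht⟩)
  have hbnd : ∀ n : ℕ, |D t| ≤ C * ((mpow F n) (Set.Icc 0 t)).toReal := by
    intro n
    rw [hDn n t ht, ← Real.norm_eq_abs]
    refine norm_setIntegral_le_of_norm_le_const (measure_lt_top _ _) ?_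
    intro u hu
    rw [Real.norm_eq_abs]
    exact hC (t - u) ⟨by linarith [hu.2], by linarith [hu.1]⟩
  have hts : Filter.Tendsto (fun n => (mpow F n) (Set.Icc 0 t)) Filter.atTop (nhds 0) := by
    refine ENNReal.tendsto_atTop_zero_of_tsum_ne_top ?_
    rw [← Measure.sum_apply _ measurableSet_Icc]
    exact (hΦfin t).ne
  have hts2 : Filter.Tendsto (fun n => C * ((mpow F n) (Set.Icc 0 t)).toReal)
      Filter.atTop (nhds 0) := by
    have h0 : Filter.Tendsto (fun n => ((mpow F n) (Set.Icc 0 t)).toReal)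
        Filter.atTop (nhds 0) := by
      simpa [Function.comp_def] using (ENNReal.tendsto_toReal (a := 0) (by simp)).comp hts
    simpa using h0.const_mul C
  have habs : |D t| ≤ 0 := ge_of_tendsto' hts2 hbnd
  have hD0 : D t = 0 := abs_eq_zero.1 (le_antisymm habs (abs_nonneg _))
  have : Z t - Z₀ t = 0 := hD0
  linarith [this]
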